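/- Let t = 2^{a_1} + 2^{a_2} + … + 2^{a_s} with a_1 > a_2 > … > a_s ≥ 0 be the binary representation of a positive integer t, and let τ_i = ∑_{j≤i} 2^{a_j}. In the dyadic resigning scheme (re-sign the last 2^ℓ items at time t where 2^ℓ is the largest power of 2 dividing t), the partition of {1,…,t} maintained at time t is exactly the intervals (τ_{i-1}, τ_i] for i = 1,…,s. -/
import Mathlib


open Finset

/-- Left endpoint of the dyadic block ending at `s`: `s - 2^{v₂(s)}`. -/
def blockStart (s : ℕ) : ℕ := s - 2 ^ (padicValNat 2 s)

/-- The last time `≤ t` at which item `j` was (re-)signed in the dyadic resigning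
scheme. -/
def lastResign (t j : ℕ) : ℕ :=
  Nat.findGreatest (fun s => j ≤ s ∧ blockStart s < j) t

lemma padicValNat_eq_of_dvd_of_not_dvd {n k : ℕ} (hn : n ≠ 0)
    (h1 : 2 ^ k ∣ n) (h2 : ¬ 2 ^ (k + 1) ∣ n) : padicValNat 2 n = k := by
  have hp : Nat.Prime 2 := Nat.prime_two
  have h1' : k ≤ n.factorization 2 :=
    (Nat.Prime.pow_dvd_iff_le_factorization hp hn).mp h1
  have h2' : ¬ (k + 1 ≤ n.factorization 2) := fun h =>
    h2 ((Nat.Prime.pow_dvd_iff_le_factorization hp hn).mpr h)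
  have heq : n.factorization 2 = padicValNat 2 n := Nat.factorization_def n hp
  omega

lemma two_pow_sum_range (b : ℕ) : ∑ k ∈ Finset.range b, 2 ^ k = 2 ^ b - 1 := by
  induction b with
  | zero => simp
  | succ b ih =>
    rw [Finset.sum_range_succ, ih]
    have : 1 ≤ 2 ^ b := Nat.one_le_two_pow
    have : 2 ^ (b + 1) = 2 * 2 ^ b := by ring
    omega

lemma sum_two_pow_lt {F : Finset ℕ} {a : ℕ → ℕ} {b : ℕ}
    (hinj : Set.InjOn a F) (hb : ∀ m ∈ F, a m < b) :
    ∑ m ∈ F, 2 ^ (a m) < 2 ^ b := by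
  have h1 : ∑ m ∈ F, 2 ^ (a m) = ∑ k ∈ F.image a, 2 ^ k :=
    (Finset.sum_image (fun x hx y hy h => hinj hx hy h)).symm
  have h2 : F.image a ⊆ Finset.range b := by
    intro k hk
    obtain ⟨m, hm, rfl⟩ := Finset.mem_image.mp hk
    exact Finset.mem_range.mpr (hb m hm)
  have h3 : ∑ k ∈ F.image a, 2 ^ k ≤ ∑ k ∈ Finset.range b, 2 ^ k :=
    Finset.sum_le_sum_of_subset h2
  have h4 := two_pow_sum_range b
  have h5 : 1 ≤ 2 ^ b := Nat.one_le_two_pow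
  omega

/-- **Block structure of the dyadic resigning scheme.** Write
`t = 2^{a 0} + … + 2^{a (s-1)}` with `a` strictly decreasing, and let
`τ i = ∑_{m < i} 2^{a m}`. Then the partition of `{1,…,t}` maintained by the scheme at
time `t` is exactly the intervals `(τ (i-1), τ i]` for `i = 1,…,s`: each `j` lies in a
unique such interval, its last resign time is `τ i` and the block of `τ i` starts
at `τ (i-1)`. -/
theorem stmt17 (t s : ℕ) (ht : 1 ≤ t) (a : ℕ → ℕ)
    (hanti : ∀ i j : ℕ, i < j → j < s → a j < a i)
    (hrep : t = ∑ i ∈ Finset.range s, 2 ^ (a i)) :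
    ∀ j : ℕ, 1 ≤ j → j ≤ t →
      ∃ i : ℕ, 1 ≤ i ∧ i ≤ s ∧
        (∑ m ∈ Finset.range (i - 1), 2 ^ (a m)) < j ∧
        j ≤ (∑ m ∈ Finset.range i, 2 ^ (a m)) ∧
        lastResign t j = ∑ m ∈ Finset.range i, 2 ^ (a m) ∧
        blockStart (∑ m ∈ Finset.range i, 2 ^ (a m)) = ∑ m ∈ Finset.range (i - 1), 2 ^ (a m) := by
  intro j hj1 hjt
  have hex : ∃ i, j ≤ ∑ m ∈ Finset.range i, 2 ^ (a m) := ⟨s, hrep ▸ hjt⟩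
  set i := Nat.find hex with hi
  have hji : j ≤ ∑ m ∈ Finset.range i, 2 ^ (a m) := Nat.find_spec hex
  have hipos : 1 ≤ i := by
    rcases Nat.eq_zero_or_pos i with h | h
    · rw [h] at hji; simp at hji; omega
    · exact h
  have his : i ≤ s := Nat.find_min' hex (hrep ▸ hjt)
  have hprev : (∑ m ∈ Finset.range (i - 1), 2 ^ (a m)) < j := by
    have := Nat.find_min hex (m := i - 1) (by omega)
    omega
  -- s-index of the last summand
  have his1 : i - 1 < s := by omega
  have hsucc : (∑ m ∈ Finset.range i, 2 ^ (a m))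
      = (∑ m ∈ Finset.range (i - 1), 2 ^ (a m)) + 2 ^ (a (i - 1)) := by
    have h1 : i = (i - 1) + 1 := by omega
    conv_lhs => rw [h1, Finset.sum_range_succ]
  have hdvd : 2 ^ (a (i - 1)) ∣ ∑ m ∈ Finset.range i, 2 ^ (a m) := by
    refine Finset.dvd_sum fun m hm => pow_dvd_pow 2 ?_
    rw [Finset.mem_range] at hm
    rcases eq_or_lt_of_le (Nat.lt_succ_iff.mp (by omega : m < (i - 1) + 1)) with h | h
    · exact le_of_eq (by rw [h])
    · exact le_of_lt (hanti m (i - 1) h his1)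
  have hdvd' : 2 ^ (a (i - 1) + 1) ∣ ∑ m ∈ Finset.range (i - 1), 2 ^ (a m) := by
    refine Finset.dvd_sum fun m hm => pow_dvd_pow 2 ?_
    rw [Finset.mem_range] at hm
    exact hanti m (i - 1) hm his1
  have hnot : ¬ 2 ^ (a (i - 1) + 1) ∣ ∑ m ∈ Finset.range i, 2 ^ (a m) := by
    intro h
    rw [hsucc] at h
    have h2 : 2 ^ (a (i - 1) + 1) ∣ 2 ^ (a (i - 1)) := (Nat.dvd_add_right hdvd').mp h
    have := Nat.le_of_dvd (by positivity) h2
    have : (2 : ℕ) ^ (a (i - 1)) < 2 ^ (a (i - 1) + 1) := by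
      exact Nat.pow_lt_pow_right one_lt_two (by omega)
    omega
  have hne : (∑ m ∈ Finset.range i, 2 ^ (a m)) ≠ 0 := by omega
  have hval : padicValNat 2 (∑ m ∈ Finset.range i, 2 ^ (a m)) = a (i - 1) :=
    padicValNat_eq_of_dvd_of_not_dvd hne hdvd hnot
  have hblock : blockStart (∑ m ∈ Finset.range i, 2 ^ (a m))
      = ∑ m ∈ Finset.range (i - 1), 2 ^ (a m) := by
    rw [blockStart, hval]; omega
  have hτit : (∑ m ∈ Finset.range i, 2 ^ (a m)) ≤ t := by
    rw [hrep]
    exact Finset.sum_le_sum_of_subset (Finset.range_subset_range.mpr his)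
  -- remainder bound: t - τ i < 2^(a (i-1))
  have hrem : t - (∑ m ∈ Finset.range i, 2 ^ (a m)) < 2 ^ (a (i - 1)) := by
    have hsplit : (∑ m ∈ Finset.range i, 2 ^ (a m)) + (∑ m ∈ Finset.Ico i s, 2 ^ (a m)) = t := by
      rw [hrep]
      simp only [Finset.range_eq_Ico]
      exact Finset.sum_Ico_consecutive _ (Nat.zero_le i) his
    have hlt : (∑ m ∈ Finset.Ico i s, 2 ^ (a m)) < 2 ^ (a (i - 1)) := by
      refine sum_two_pow_lt ?_ ?_
      · intro x hx y hy hxy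
        simp only [Finset.coe_Ico, Set.mem_Ico] at hx hy
        by_contra hne'
        rcases Nat.lt_or_ge x y with h | h
        · exact absurd hxy (Nat.ne_of_gt (hanti x y h hy.2))
        · have h' : y < x := by omega
          exact absurd hxy.symm (Nat.ne_of_gt (hanti y x h' hx.2))
      · intro m hm
        rw [Finset.mem_Ico] at hm
        exact hanti (i - 1) m (by omega) hm.2
    omega
  -- maximality: no resign time in (τ i, t]
  have hmax : ∀ n, (∑ m ∈ Finset.range i, 2 ^ (a m)) < n → n ≤ t →
      ¬ (j ≤ n ∧ blockStart n < j) := by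
    intro n hn1 hn2 ⟨hjn, hbs⟩
    set k := padicValNat 2 n with hk
    have hk2 : 2 ^ k ∣ n := pow_padicValNat_dvd
    have hklt : k < a (i - 1) := by
      by_contra hge
      have hdn : 2 ^ (a (i - 1)) ∣ n := dvd_trans (pow_dvd_pow 2 (by omega)) hk2
      have hdr : 2 ^ (a (i - 1)) ∣ n - (∑ m ∈ Finset.range i, 2 ^ (a m)) :=
        Nat.dvd_sub hdn hdvd
      have := Nat.le_of_dvd (by omega) hdr
      omega
    have hkτ : 2 ^ k ∣ ∑ m ∈ Finset.range i, 2 ^ (a m) :=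
      dvd_trans (pow_dvd_pow 2 (by omega)) hdvd
    have hkr : 2 ^ k ∣ n - (∑ m ∈ Finset.range i, 2 ^ (a m)) := Nat.dvd_sub hk2 hkτ
    have hkle : 2 ^ k ≤ n - (∑ m ∈ Finset.range i, 2 ^ (a m)) := Nat.le_of_dvd (by omega) hkr
    have : (∑ m ∈ Finset.range i, 2 ^ (a m)) ≤ blockStart n := by
      rw [blockStart, ← hk]; omega
    omega
  have hfind : lastResign t j = ∑ m ∈ Finset.range i, 2 ^ (a m) := by
    rw [lastResign]
    rw [Nat.findGreatest_eq_iff]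
    refine ⟨hτit, fun _ => ⟨hji, ?_⟩, fun n hn1 hn2 => hmax n hn1 hn2⟩
    rw [hblock]; exact hprev
  exact ⟨i, hipos, his, hprev, hji, hfind, hblock⟩
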